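/- arXiv:2012.10148 — 3 statements merged into one kernel-verified Lean document; each statement's English description precedes it below -/
import Mathlib

section
/- For all vectors a, b in ℝ^d and 1 < p < ∞, if (|a|^{p-2} a - |b|^{p-2} b) · (a - b) = 0 then a = b; that is, the p-Laplace vector field ξ ↦ |ξ|^{p-2}ξ is strictly monotone. -/
/-- Strict monotonicity of the p-Laplace vector field `ξ ↦ |ξ|^{p-2} ξ` on `ℝ^d`:
if `(|a|^{p-2} a - |b|^{p-2} b) · (a - b) = 0` then `a = b`. -/
theorem pLaplace_field_strict_monotone (d : ℕ) (hd : 0 < d) (p : ℝ) (hp : 1 < p)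
    (a b : EuclideanSpace ℝ (Fin d))
    (h : (inner ℝ ((‖a‖ ^ (p - 2) : ℝ) • a - (‖b‖ ^ (p - 2) : ℝ) • b) (a - b) : ℝ) = 0) :
    a = b := by
  by_cases ha : a = 0
  · subst ha
    by_contra hb
    have hb' : b ≠ 0 := fun hh => hb hh.symm
    have hs : 0 < ‖b‖ := norm_pos_iff.mpr hb'
    have hsp : 0 < ‖b‖ ^ (p - 2) := Real.rpow_pos_of_pos hs _
    have hsq : 0 < ‖b‖ ^ 2 := by positivity
    simp only [inner_sub_left, inner_sub_right, real_inner_smul_left, norm_zero,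
      inner_zero_left, inner_zero_right, real_inner_self_eq_norm_sq] at h
    nlinarith
  · by_cases hbz : b = 0
    · subst hbz
      exfalso
      have hr : 0 < ‖a‖ := norm_pos_iff.mpr ha
      have hrp : 0 < ‖a‖ ^ (p - 2) := Real.rpow_pos_of_pos hr _
      have hsq : 0 < ‖a‖ ^ 2 := by positivity
      simp only [inner_sub_left, inner_sub_right, real_inner_smul_left, norm_zero,
        inner_zero_left, inner_zero_right, real_inner_self_eq_norm_sq] at h
      nlinarith
    · set r := ‖a‖ with hrdef
      set s := ‖b‖ with hsdef
      set t := (inner ℝ a b : ℝ) with htdef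
      have hr : 0 < r := norm_pos_iff.mpr ha
      have hs : 0 < s := norm_pos_iff.mpr hbz
      have hrp : 0 < r ^ (p - 2) := Real.rpow_pos_of_pos hr _
      have hsp : 0 < s ^ (p - 2) := Real.rpow_pos_of_pos hs _
      have h' : r ^ (p-2) * r ^ 2 + s ^ (p-2) * s ^ 2 = (r ^ (p-2) + s ^ (p-2)) * t := by
        have hc : (inner ℝ b a : ℝ) = t := real_inner_comm a b
        simp only [inner_sub_left, inner_sub_right, real_inner_smul_left,
          real_inner_self_eq_norm_sq] at h
        rw [hc] at h
        rw [show (inner ℝ a b : ℝ) = t from rfl] at h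
        ring_nf at h ⊢
        linarith
      have hr2 : r ^ (p-2) * r ^ 2 = r ^ p := by
        rw [show (r:ℝ)^2 = r ^ (2:ℝ) by rw [← Real.rpow_natCast r 2]; norm_num,
          ← Real.rpow_add hr]; ring_nf
      have hs2 : s ^ (p-2) * s ^ 2 = s ^ p := by
        rw [show (s:ℝ)^2 = s ^ (2:ℝ) by rw [← Real.rpow_natCast s 2]; norm_num,
          ← Real.rpow_add hs]; ring_nf
      have hr1 : r ^ (p-2) * r = r ^ (p-1) := by
        rw [show p - 1 = (p-2) + 1 by ring, Real.rpow_add_one hr.ne']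
      have hs1 : s ^ (p-2) * s = s ^ (p-1) := by
        rw [show p - 1 = (p-2) + 1 by ring, Real.rpow_add_one hs.ne']
      have hra : r ^ (p-1) * r = r ^ p := by
        nth_rewrite 2 [show p = (p-1) + 1 by ring]
        rw [Real.rpow_add_one hr.ne']
      have hsa : s ^ (p-1) * s = s ^ p := by
        nth_rewrite 2 [show p = (p-1) + 1 by ring]
        rw [Real.rpow_add_one hs.ne']
      have hcs : t ≤ r * s := real_inner_le_norm a b
      have hp1 : (0:ℝ) < p - 1 := by linarith
      -- r^p + s^p ≤ r^{p-1} s + s^{p-1} r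
      have key : r ^ p + s ^ p ≤ r ^ (p-1) * s + s ^ (p-1) * r := by
        have : (r ^ (p-2) + s ^ (p-2)) * t ≤ (r ^ (p-2) + s ^ (p-2)) * (r * s) := by
          apply mul_le_mul_of_nonneg_left hcs (by positivity)
        nlinarith
      have hrs : r = s := by
        rcases lt_trichotomy r s with h1 | h1 | h1
        · exfalso
          have := Real.rpow_lt_rpow hr.le h1 hp1
          nlinarith
        · exact h1
        · exfalso
          have := Real.rpow_lt_rpow hs.le h1 hp1
          nlinarith
      have ht : t = r ^ 2 := by
        have h'' : r ^ (p-2) * r ^ 2 + r ^ (p-2) * r ^ 2 = (r ^ (p-2) + r ^ (p-2)) * t := by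
          rw [hrs] at h' ⊢; exact h'
        nlinarith
      have hn : ‖a - b‖ ^ 2 = 0 := by
        rw [@norm_sub_sq_real]
        rw [← hrdef, ← hsdef, ← htdef, ← hrs, ht]; ring
      have := pow_eq_zero_iff (n := 2) (by norm_num) |>.mp hn
      exact sub_eq_zero.mp (norm_eq_zero.mp this)
end

section
/- Let V be a reflexive separable Banach space and A : V → V' a hemicontinuous, strictly monotone, bounded, coercive operator which is bijective. Then the inverse A⁻¹ : V' → V is demicontinuous: if f_n → f strongly in V' then A⁻¹(f_n) ⇀ A⁻¹(f) weakly in V. -/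
open Filter
open TopologicalSpace NormedSpace


lemma dual_separable_aux {V : Type*} [NormedAddCommGroup V] [NormedSpace ℝ V]
    [SeparableSpace V]
    (hrefl : Function.Surjective ⇑(inclusionInDoubleDual ℝ V)) :
    SeparableSpace (StrongDual ℝ V) := by
  haveI : Nonempty (StrongDual ℝ (StrongDual ℝ V)) := ⟨0⟩
  haveI hsep2 : SeparableSpace (StrongDual ℝ (StrongDual ℝ V)) :=
    hrefl.denseRange.separableSpace (inclusionInDoubleDual ℝ V).continuous
  obtain ⟨d, hd⟩ := exists_dense_seq (StrongDual ℝ (StrongDual ℝ V))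
  have hx : ∀ k : ℕ, ∃ x : StrongDual ℝ V, ‖x‖ ≤ 1 ∧ (0 < ‖d k‖ → ‖d k‖ / 2 < ‖(d k) x‖) := by
    intro k
    by_cases h : 0 < ‖d k‖
    · obtain ⟨x, hx1, hx2⟩ := (d k).exists_lt_apply_of_lt_opNorm (half_lt_self h)
      exact ⟨x, hx1.le, fun _ => hx2⟩
    · exact ⟨0, by simp, fun h' => absurd h' h⟩
  choose x hx1 hx2 using hx
  have htop : closure ((Submodule.span ℝ (Set.range x) : Submodule ℝ (StrongDual ℝ V)) : Set (StrongDual ℝ V))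
      = Set.univ := by
    by_contra hne
    obtain ⟨h, hh⟩ : ∃ h : StrongDual ℝ V, h ∉ closure
        ((Submodule.span ℝ (Set.range x) : Submodule ℝ (StrongDual ℝ V)) : Set (StrongDual ℝ V)) := by
      by_contra hc
      push_neg at hc
      exact hne (Set.eq_univ_of_forall hc)
    obtain ⟨F, s, hFs, hsF⟩ := geometric_hahn_banach_point_closed
      ((Submodule.span ℝ (Set.range x)).convex.closure) isClosed_closure hh
    have hs0 : s < 0 := by
      have := hsF 0 (subset_closure (Submodule.zero_mem _))
      simpa using this
    have hFvan : ∀ b ∈ Submodule.span ℝ (Set.range x), F b = 0 := by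
      intro b hb
      by_contra hFb
      have hcb : ((s - 1) / F b) • b ∈ Submodule.span ℝ (Set.range x) :=
        Submodule.smul_mem _ _ hb
      have := hsF _ (subset_closure hcb)
      rw [map_smul, smul_eq_mul, div_mul_cancel₀ _ hFb] at this
      linarith
    have hFne : F ≠ 0 := by
      intro h0
      rw [h0] at hFs
      simp at hFs
      linarith
    have hFpos : 0 < ‖F‖ := by
      rcases (norm_nonneg F).lt_or_eq with h | h
      · exact h
      · exact absurd (ContinuousLinearMap.opNorm_zero_iff F |>.mp h.symm) hFne
    set G : StrongDual ℝ (StrongDual ℝ V) := ‖F‖⁻¹ • F with hG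
    have hGnorm : ‖G‖ = 1 := by
      have hs : ‖‖F‖⁻¹ • F‖ = ‖‖F‖⁻¹‖ * ‖F‖ := NormedSpace.toNormSMulClass.norm_smul ‖F‖⁻¹ F
      rw [hG, hs, norm_inv, Real.norm_eq_abs, abs_of_pos hFpos, inv_mul_cancel₀ hFpos.ne']
    obtain ⟨k, hk⟩ := Metric.denseRange_iff.mp hd G (1/4) (by norm_num)
    have hdk : (3:ℝ)/4 < ‖d k‖ := by
      have h1 : ‖G‖ - ‖d k‖ ≤ ‖G - d k‖ := norm_sub_norm_le (E := StrongDual ℝ (StrongDual ℝ V)) _ _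
      rw [dist_eq_norm (E := StrongDual ℝ (StrongDual ℝ V))] at hk
      rw [hGnorm] at h1
      linarith
    have hxk := hx2 k (by linarith)
    have hGxk : G (x k) = 0 := by
      rw [hG]
      have : F (x k) = 0 := hFvan _ (Submodule.subset_span ⟨k, rfl⟩)
      simp [this]
    have hsmall : ‖(d k) (x k)‖ ≤ 1/4 := by
      have h1 : (d k) (x k) = (d k - G) (x k) + G (x k) := by
        simp [ContinuousLinearMap.sub_apply]
      rw [h1, hGxk, add_zero]
      have h2 : ‖(d k - G) (x k)‖ ≤ ‖d k - G‖ * ‖x k‖ := (d k - G).le_opNorm _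
      have h3 : ‖d k - G‖ < 1/4 := by
        rw [← dist_eq_norm (E := StrongDual ℝ (StrongDual ℝ V)), dist_comm]
        exact hk
      have h4 : ‖d k - G‖ * ‖x k‖ ≤ (1/4) * 1 :=
        mul_le_mul h3.le (hx1 k) (norm_nonneg _) (by norm_num)
      linarith
    linarith
  have hsep : IsSeparable (closure
      ((Submodule.span ℝ (Set.range x) : Submodule ℝ (StrongDual ℝ V)) : Set (StrongDual ℝ V))) :=
    ((Set.countable_range x).isSeparable.span).closure
  rw [htop] at hsep
  exact isSeparable_univ_iff.mp hsep

set_option maxHeartbeats 1000000 in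
/-- Demicontinuity of the inverse of a hemicontinuous, strictly monotone, bounded,
coercive, bijective operator `A : V → V'` on a reflexive separable Banach space `V`:
if `f n → f` strongly in `V'` then `A⁻¹ (f n) ⇀ A⁻¹ f` weakly in `V`
(formulated via preimages: if `A (u n) = f n`, `A u₀ = f` and `f n → f`, then
`u n ⇀ u₀`). -/
theorem inverse_demicontinuous {V : Type*} [NormedAddCommGroup V] [NormedSpace ℝ V]
    [CompleteSpace V] [TopologicalSpace.SeparableSpace V]
    (hrefl : Function.Surjective ⇑(NormedSpace.inclusionInDoubleDual ℝ V))
    (A : V → StrongDual ℝ V)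
    (hhemi : ∀ u v w : V, Continuous fun t : ℝ => (A (u + t • v)) w)
    (hmono : ∀ u v : V, 0 ≤ (A u - A v) (u - v))
    (hstrict : ∀ u v : V, (A u - A v) (u - v) = 0 → u = v)
    (hbdd : ∀ s : Set V, Bornology.IsBounded s → Bornology.IsBounded (A '' s))
    (hcoer : ∀ M : ℝ, ∃ R : ℝ, ∀ v : V, R ≤ ‖v‖ → M * ‖v‖ ≤ (A v) v)
    (hbij : Function.Bijective A)
    (f : ℕ → StrongDual ℝ V) (g : StrongDual ℝ V)
    (hconv : Tendsto f atTop (nhds g))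
    (u : ℕ → V) (u₀ : V) (hu : ∀ n, A (u n) = f n) (hu₀ : A u₀ = g) :
    ∀ ℓ : StrongDual ℝ V, Tendsto (fun n => ℓ (u n)) atTop (nhds (ℓ u₀)) := by
  intro ℓ
  -- uniform bound on the data `f`
  obtain ⟨K, hK⟩ : ∃ K : ℝ, ∀ n, ‖f n‖ ≤ K := by
    obtain ⟨R, -, hR⟩ := cauchySeq_bdd hconv.cauchySeq
    refine ⟨‖f 0‖ + R, fun n => ?_⟩
    have h1 := hR n 0
    have h2 : ‖f n‖ - ‖f 0‖ ≤ ‖f n - f 0‖ := norm_sub_norm_le _ _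
    rw [dist_eq_norm] at h1
    linarith
  -- uniform bound on the solutions `u` via coercivity
  obtain ⟨R, hR⟩ := hcoer (K + 1)
  set C : ℝ := max R 0 with hC
  have hC0 : (0:ℝ) ≤ C := le_max_right _ _
  have huC : ∀ n, ‖u n‖ ≤ C := by
    intro n
    rcases le_or_gt R ‖u n‖ with h | h
    · have h1 := hR (u n) h
      have h2 : (A (u n)) (u n) ≤ K * ‖u n‖ := by
        rw [hu n]
        calc (f n) (u n) ≤ ‖(f n) (u n)‖ := Real.le_norm_self _
        _ ≤ ‖f n‖ * ‖u n‖ := (f n).le_opNorm _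
        _ ≤ K * ‖u n‖ := mul_le_mul_of_nonneg_right (hK n) (norm_nonneg _)
      have h3 : ‖u n‖ ≤ 0 := by nlinarith [norm_nonneg (u n)]
      linarith
    · exact h.le.trans (le_max_left _ _)
  haveI hsepdual : SeparableSpace (StrongDual ℝ V) := dual_separable_aux hrefl
  haveI : Nonempty (StrongDual ℝ V) := ⟨0⟩
  obtain ⟨e, he⟩ := exists_dense_seq (StrongDual ℝ V)
  apply tendsto_of_subseq_tendsto
  intro ns hns
  -- extract a subsequence converging weakly against the countable dense family `e`
  have hmem : ∀ k, (fun i => e i (u (ns k))) ∈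
      Set.univ.pi (fun i : ℕ => Set.Icc (-(‖e i‖ * C)) (‖e i‖ * C)) := by
    intro k
    rw [Set.mem_univ_pi]
    intro i
    have hb : ‖e i (u (ns k))‖ ≤ ‖e i‖ * C :=
      le_trans ((e i).le_opNorm _) (mul_le_mul_of_nonneg_left (huC _) (norm_nonneg _))
    rw [Real.norm_eq_abs] at hb
    exact Set.mem_Icc.mpr (abs_le.mp hb)
  obtain ⟨a, -, φ, hφ, hφt⟩ :=
    (isCompact_univ_pi fun i : ℕ => isCompact_Icc).tendsto_subseq hmem
  have hpt : ∀ i, Tendsto (fun k => e i (u (ns (φ k)))) atTop (nhds (a i)) := by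
    rw [tendsto_pi_nhds] at hφt
    intro i
    simpa [Function.comp] using hφt i
  have hC4 : (0:ℝ) < 4 * C + 4 := by linarith
  -- convergence against every functional, by density and equiboundedness
  have key : ∀ h : StrongDual ℝ V, ∃ L : ℝ, Tendsto (fun k => h (u (ns (φ k)))) atTop (nhds L) := by
    intro h
    refine cauchySeq_tendsto_of_complete ?_
    rw [Metric.cauchySeq_iff]
    intro ε hε
    obtain ⟨i, hi⟩ := Metric.denseRange_iff.mp he h (ε / (4 * C + 4)) (div_pos hε hC4)
    obtain ⟨N, hN⟩ := Metric.cauchySeq_iff.mp (hpt i).cauchySeq (ε/4) (by positivity)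
    refine ⟨N, fun m hm n hn => ?_⟩
    have hbound : ∀ k, |h (u (ns (φ k))) - e i (u (ns (φ k)))| ≤ ε / 4 := by
      intro k
      have h1 : ‖(h - e i) (u (ns (φ k)))‖ ≤ ‖h - e i‖ * ‖u (ns (φ k))‖ := (h - e i).le_opNorm _
      rw [ContinuousLinearMap.sub_apply, Real.norm_eq_abs] at h1
      have h2 : ‖h - e i‖ * ‖u (ns (φ k))‖ ≤ (ε / (4*C+4)) * C := by
        apply mul_le_mul _ (huC _) (norm_nonneg _) (le_of_lt (div_pos hε hC4))
        rw [← dist_eq_norm]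
        exact hi.le
      have h3 : (ε / (4*C+4)) * C ≤ ε / 4 := by
        rw [div_mul_eq_mul_div, div_le_div_iff₀ hC4 (by norm_num)]
        nlinarith
      linarith
    have t1 : |h (u (ns (φ m))) - h (u (ns (φ n)))|
        ≤ |h (u (ns (φ m))) - e i (u (ns (φ m)))| + |e i (u (ns (φ m))) - h (u (ns (φ n)))| :=
      abs_sub_le _ _ _
    have t2 : |e i (u (ns (φ m))) - h (u (ns (φ n)))|
        ≤ |e i (u (ns (φ m))) - e i (u (ns (φ n)))| + |e i (u (ns (φ n))) - h (u (ns (φ n)))| :=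
      abs_sub_le _ _ _
    have t3 := hN m hm n hn
    rw [Real.dist_eq] at t3 ⊢
    have t4 : |e i (u (ns (φ n))) - h (u (ns (φ n)))| = |h (u (ns (φ n))) - e i (u (ns (φ n)))| :=
      abs_sub_comm _ _
    have b1 := hbound m
    have b2 := hbound n
    rw [t4] at t2
    linarith
  choose L hL using key
  -- the limit is a bounded linear functional, hence by reflexivity given by some `w : V`
  have hLadd : ∀ h₁ h₂ : StrongDual ℝ V, L (h₁ + h₂) = L h₁ + L h₂ := by
    intro h₁ h₂
    refine tendsto_nhds_unique (hL (h₁ + h₂)) ?_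
    have := (hL h₁).add (hL h₂)
    simpa using this
  have hLsmul : ∀ (c : ℝ) (h : StrongDual ℝ V), L (c • h) = c * L h := by
    intro c h
    refine tendsto_nhds_unique (hL (c • h)) ?_
    have := (hL h).const_mul c
    simpa using this
  have hLbdd : ∀ h : StrongDual ℝ V, ‖L h‖ ≤ C * ‖h‖ := by
    intro h
    refine le_of_tendsto' (hL h).norm fun k => ?_
    calc ‖h (u (ns (φ k)))‖ ≤ ‖h‖ * ‖u (ns (φ k))‖ := h.le_opNorm _
    _ ≤ ‖h‖ * C := mul_le_mul_of_nonneg_left (huC _) (norm_nonneg _)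
    _ = C * ‖h‖ := mul_comm _ _
  obtain ⟨w, hw⟩ := hrefl (LinearMap.mkContinuous
      { toFun := L
        map_add' := hLadd
        map_smul' := fun c h => by simpa using hLsmul c h } C hLbdd)
  have hweak : ∀ h : StrongDual ℝ V, Tendsto (fun k => h (u (ns (φ k)))) atTop (nhds (h w)) := by
    intro h
    have hval : h w = L h := by
      have h1 := ContinuousLinearMap.ext_iff.mp hw h
      rwa [NormedSpace.dual_def] at h1
    rw [hval]
    exact hL h
  have hfsub : Tendsto (fun k => f (ns (φ k))) atTop (nhds g) :=
    hconv.comp (hns.comp hφ.tendsto_atTop)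
  have hnorm0 : Tendsto (fun k => ‖f (ns (φ k)) - g‖) atTop (nhds 0) := by
    have := (tendsto_sub_nhds_zero_iff.mpr hfsub).norm
    simpa using this
  -- limit inequality from monotonicity
  have hkey : ∀ v : V, 0 ≤ (g - A v) (w - v) := by
    intro v
    have t1 : Tendsto (fun k => (f (ns (φ k))) (u (ns (φ k)))) atTop (nhds (g w)) := by
      have h0 : Tendsto (fun k => (f (ns (φ k)) - g) (u (ns (φ k)))) atTop (nhds 0) := by
        have hb : ∀ k, ‖(f (ns (φ k)) - g) (u (ns (φ k)))‖ ≤ ‖f (ns (φ k)) - g‖ * C := fun k =>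
          le_trans ((f (ns (φ k)) - g).le_opNorm _)
            (mul_le_mul_of_nonneg_left (huC _) (norm_nonneg _))
        exact squeeze_zero_norm hb (by simpa using hnorm0.mul_const C)
      have hsum := h0.add (hweak g)
      simp only [ContinuousLinearMap.sub_apply] at hsum
      simpa using hsum
    have t2 : Tendsto (fun k => (f (ns (φ k))) v) atTop (nhds (g v)) := by
      apply tendsto_sub_nhds_zero_iff.mp
      have hb : ∀ k, ‖(f (ns (φ k))) v - g v‖ ≤ ‖f (ns (φ k)) - g‖ * ‖v‖ := by
        intro k
        have := (f (ns (φ k)) - g).le_opNorm v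
        simpa [ContinuousLinearMap.sub_apply] using this
      exact squeeze_zero_norm hb (by simpa using hnorm0.mul_const ‖v‖)
    have t3 := hweak (A v)
    have hterm : ∀ k, 0 ≤ (f (ns (φ k)) - A v) (u (ns (φ k)) - v) := by
      intro k
      have := hmono (u (ns (φ k))) v
      rwa [hu (ns (φ k))] at this
    have hlim : Tendsto (fun k => (f (ns (φ k)) - A v) (u (ns (φ k)) - v)) atTop
        (nhds ((g - A v) (w - v))) := by
      have hcomb := (t1.sub t2).sub (t3.sub (tendsto_const_nhds (x := (A v) v)))
      have heq : (fun k => (f (ns (φ k)) - A v) (u (ns (φ k)) - v))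
          = fun k => (f (ns (φ k))) (u (ns (φ k))) - (f (ns (φ k))) v
            - ((A v) (u (ns (φ k))) - (A v) v) := by
        funext k
        simp only [ContinuousLinearMap.sub_apply, map_sub]
        ring
      have heq2 : (g - A v) (w - v) = g w - g v - ((A v) w - (A v) v) := by
        simp only [ContinuousLinearMap.sub_apply, map_sub]
        ring
      rw [heq, heq2]
      exact hcomb
    exact ge_of_tendsto' hlim hterm
  -- Minty's trick: A w = g
  have hAw : A w = g := by
    have hz : ∀ z : V, g z ≤ (A w) z := by
      intro z
      have hψ := hhemi w z z
      have h0 : (A (w + (0:ℝ) • z)) z = (A w) z := by norm_num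
      have htend : Tendsto (fun t : ℝ => (A (w + t • z)) z) (nhdsWithin 0 (Set.Ioi 0))
          (nhds ((A w) z)) := by
        have h' : Tendsto (fun t : ℝ => (A (w + t • z)) z) (nhds 0) (nhds ((A w) z)) := by
          have := hψ.tendsto 0
          rwa [h0] at this
        exact h'.mono_left nhdsWithin_le_nhds
      refine ge_of_tendsto htend ?_
      filter_upwards [self_mem_nhdsWithin] with t ht
      have ht0 : (0:ℝ) < t := ht
      have hk := hkey (w + t • z)
      have hwz : w - (w + t • z) = (-t) • z := by
        rw [neg_smul]
        abel
      rw [hwz, map_smul, smul_eq_mul] at hk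
      have hq : (g - A (w + t • z)) z ≤ 0 := by nlinarith
      rw [ContinuousLinearMap.sub_apply] at hq
      linarith
    have hz2 : ∀ z : V, (A w) z = g z := by
      intro z
      refine le_antisymm ?_ (hz z)
      have := hz (-z)
      simp only [map_neg] at this
      linarith
    exact ContinuousLinearMap.ext hz2
  have hw0 : w = u₀ := hbij.injective (by rw [hAw, hu₀])
  refine ⟨φ, ?_⟩
  rw [← hw0]
  exact hweak ℓ
end

section
/- Let V be a reflexive Banach space, A : V → V' monotone and hemicontinuous, (u_n) a sequence in V with u_n ⇀ u weakly in V, A(u_n) → f strongly in V', and limsup_n ⟨A(u_n), u_n⟩ ≤ ⟨f, u⟩. Then A(u) = f (Minty's trick). -/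
open Filter

/-- Minty's trick: on a reflexive Banach space `V`, if `A : V → V'` is monotone and
hemicontinuous, `u n ⇀ u₀` weakly in `V`, `A (u n) → f` strongly in `V'`, and
`limsup ⟨A (u n), u n⟩ ≤ ⟨f, u₀⟩`, then `A u₀ = f`. -/
theorem minty_trick {V : Type*} [NormedAddCommGroup V] [NormedSpace ℝ V]
    [CompleteSpace V]
    (hrefl : Function.Surjective ⇑(NormedSpace.inclusionInDoubleDual ℝ V))
    (A : V → StrongDual ℝ V)
    (hmono : ∀ u v : V, 0 ≤ (A u - A v) (u - v))
    (hhemi : ∀ u v w : V, Continuous fun t : ℝ => (A (u + t • v)) w)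
    (u : ℕ → V) (u₀ : V)
    (hweak : ∀ ℓ : StrongDual ℝ V,
      Tendsto (fun n => ℓ (u n)) atTop (nhds (ℓ u₀)))
    (f : StrongDual ℝ V)
    (hstrong : Tendsto (fun n => A (u n)) atTop (nhds f))
    (hlimsup : limsup (fun n => (A (u n)) (u n)) atTop ≤ f u₀) :
    A u₀ = f := by
  -- the sequence `u n` is norm-bounded, by Banach–Steinhaus in the double dual
  obtain ⟨C, hC⟩ : ∃ C, ∀ n, ‖u n‖ ≤ C := by
    have hpt : ∀ ℓ : StrongDual ℝ V, ∃ C, ∀ n,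
        ‖(NormedSpace.inclusionInDoubleDual ℝ V (u n)) ℓ‖ ≤ C := by
      intro ℓ
      obtain ⟨C, hCb⟩ := ((hweak ℓ).norm.bddAbove_range)
      exact ⟨C, fun n => hCb (Set.mem_range_self n)⟩
    obtain ⟨C, hC⟩ := banach_steinhaus hpt
    refine ⟨C, fun n => ?_⟩
    have := (NormedSpace.inclusionInDoubleDualLi ℝ (E := V)).norm_map (u n)
    calc ‖u n‖ = ‖NormedSpace.inclusionInDoubleDual ℝ V (u n)‖ := this.symm
      _ ≤ C := hC n
  -- the sequence `A (u n)` is norm-bounded since it converges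
  obtain ⟨D, hD⟩ : ∃ D, ∀ n, ‖A (u n)‖ ≤ D := by
    obtain ⟨D, hDb⟩ := (hstrong.norm.bddAbove_range)
    exact ⟨D, fun n => hDb (Set.mem_range_self n)⟩
  have hbdd : IsBoundedUnder (· ≤ ·) atTop (fun n => (A (u n)) (u n)) := by
    refine isBoundedUnder_of ⟨D * C, fun n => ?_⟩
    calc (A (u n)) (u n) ≤ ‖(A (u n)) (u n)‖ := le_abs_self _
      _ ≤ ‖A (u n)‖ * ‖u n‖ := (A (u n)).le_opNorm (u n)
      _ ≤ D * C := by
          have h0 : (0:ℝ) ≤ ‖A (u n)‖ := norm_nonneg _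
          have h1 : (0:ℝ) ≤ ‖u n‖ := norm_nonneg _
          nlinarith [hD n, hC n]
  -- key inequality: `0 ≤ ⟨f - A v, u₀ - v⟩` for all `v`
  have key : ∀ v : V, 0 ≤ (f - A v) (u₀ - v) := by
    intro v
    have h1 : Tendsto (fun n => (A (u n)) v) atTop (nhds (f v)) :=
      ((ContinuousLinearMap.apply ℝ ℝ v).continuous.tendsto f).comp hstrong
    have ha : Tendsto (fun n => (A (u n)) v + (A v) (u n) - (A v) v) atTop
        (nhds (f v + (A v) u₀ - (A v) v)) :=
      (h1.add (hweak (A v))).sub tendsto_const_nhds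
    have hle : ∀ n, (A (u n)) v + (A v) (u n) - (A v) v ≤ (A (u n)) (u n) := by
      intro n
      have h := hmono (u n) v
      simp only [ContinuousLinearMap.sub_apply, map_sub] at h
      linarith
    have hlim : f v + (A v) u₀ - (A v) v ≤ limsup (fun n => (A (u n)) (u n)) atTop := by
      rw [← ha.limsup_eq]
      exact limsup_le_limsup (Eventually.of_forall hle) ha.isCoboundedUnder_le hbdd
    have := hlim.trans hlimsup
    simp only [ContinuousLinearMap.sub_apply, map_sub]
    linarith
  -- Minty's trick: test with `v = u₀ - t • w`, let `t → 0⁺`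
  have hval : ∀ w : V, 0 ≤ (f - A u₀) w := by
    intro w
    have hpos : ∀ t ∈ Set.Ioi (0:ℝ), 0 ≤ (f - A (u₀ + t • (-w))) w := by
      intro t ht
      have h := key (u₀ + t • (-w))
      have h2 : u₀ - (u₀ + t • (-w)) = t • w := by
        simp [smul_neg]
      rw [h2, map_smul, smul_eq_mul] at h
      exact nonneg_of_mul_nonneg_right h ht
    have hcont : Continuous (fun t : ℝ => (f - A (u₀ + t • (-w))) w) := by
      simp only [ContinuousLinearMap.sub_apply]
      exact continuous_const.sub (hhemi u₀ (-w) w)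
    have hlim : Tendsto (fun t : ℝ => (f - A (u₀ + t • (-w))) w)
        (nhdsWithin 0 (Set.Ioi 0)) (nhds ((f - A u₀) w)) := by
      have := (hcont.tendsto 0).mono_left (nhdsWithin_le_nhds (s := Set.Ioi (0:ℝ)))
      simpa using this
    refine ge_of_tendsto hlim ?_
    filter_upwards [self_mem_nhdsWithin] with t ht
    exact hpos t ht
  ext w
  have h1 := hval w
  have h2 := hval (-w)
  simp only [ContinuousLinearMap.sub_apply, map_neg] at h1 h2
  linarith
end
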